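/- (Affine Flanders–Atkinson lemma) Let F be a field with more than r+1 elements and n, p, r be integers with 0 < r ≤ min(n, p). Let J_r be the n×p matrix with top-left block I_r and all other entries zero, and let M be an n×p matrix over F with block decomposition M = [[A, C],[B, D]] where A is r×r, C is r×(p−r), B is (n−r)×r, and D is (n−r)×(p−r). If rank(J_r + tM) ≤ r for every t ∈ F, then D = 0 and B·A^k·C = 0 for every integer k ≥ 0. -/

import Mathlib

open Matrix Polynomial

theorem my_rank_row_le {F : Type} [Field F] {m n m' : Type} [Fintype m] [Fintype n] [Fintype m']
    (A : Matrix m n F) (f : m' → m) : (A.submatrix f _root_.id).rank ≤ A.rank := by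
  have h : A.submatrix f _root_.id = A.submatrix f (Equiv.refl n) := rfl
  rw [h, Matrix.rank, Matrix.rank, Matrix.mulVecLin_submatrix, LinearMap.range_comp,
    LinearMap.range_comp,
    show LinearMap.funLeft F F (Equiv.refl n).symm = LinearEquiv.funCongrLeft F F (Equiv.refl n).symm from rfl,
    LinearEquiv.range, Submodule.map_top]
  exact Submodule.finrank_map_le _ _

theorem my_rank_sub_le {F : Type} [Field F] {m n m' n' : Type} [Fintype m] [Fintype n]
    [Fintype m'] [Fintype n'] (A : Matrix m n F) (f : m' → m) (g : n' → n) :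
    (A.submatrix f g).rank ≤ A.rank := by
  have h : A.submatrix f g = (((A.submatrix f _root_.id)ᵀ.submatrix g _root_.id)ᵀ) := rfl
  calc (A.submatrix f g).rank
      = ((A.submatrix f _root_.id)ᵀ.submatrix g _root_.id).rank := by rw [h, Matrix.rank_transpose]
    _ ≤ ((A.submatrix f _root_.id)ᵀ).rank := my_rank_row_le _ _
    _ = (A.submatrix f _root_.id).rank := Matrix.rank_transpose _
    _ ≤ A.rank := my_rank_row_le _ _

theorem my_lt_aux (a n r : ℕ) (h : a < n - r) : r + a < n := by omega

/-- Core lemma: detQp = 0 -/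
theorem my_key (F : Type) [Field F] (n p r : ℕ) (hr : 0 < r) (hrn : r ≤ n) (hrp : r ≤ p)
    (hF : ((r + 1 : ℕ) : Cardinal) < Cardinal.mk F)
    (M : Matrix (Fin n) (Fin p) F)
    (hrank : ∀ t : F,
      (Matrix.of (fun (i : Fin n) (j : Fin p) =>
          if (i : ℕ) = (j : ℕ) ∧ (i : ℕ) < r then (1 : F) else 0) + t • M).rank ≤ r)
    (i : Fin (n - r)) (j : Fin (p - r)) :
    M ⟨r + i, my_lt_aux _ _ _ i.isLt⟩ ⟨r + j, my_lt_aux _ _ _ j.isLt⟩ = 0 ∧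
    ∀ k : ℕ, (fun l => M ⟨r + i, my_lt_aux _ _ _ i.isLt⟩ (Fin.castLE hrp l)) ⬝ᵥ
      (((Matrix.of fun (a b : Fin r) => M (Fin.castLE hrn a) (Fin.castLE hrp b)) ^ k) *ᵥ
        (fun l => M (Fin.castLE hrn l) ⟨r + j, my_lt_aux _ _ _ j.isLt⟩)) = 0 := by
  classical
  set Jm : Matrix (Fin n) (Fin p) F := Matrix.of (fun (i : Fin n) (j : Fin p) =>
      if (i : ℕ) = (j : ℕ) ∧ (i : ℕ) < r then (1 : F) else 0) with hJm
  have hi : r + (i : ℕ) < n := my_lt_aux _ _ _ i.isLt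
  have hj : r + (j : ℕ) < p := my_lt_aux _ _ _ j.isLt
  set ρ : Fin r ⊕ Unit → Fin n := Sum.elim (Fin.castLE hrn) (fun _ => ⟨r + i, hi⟩) with hρ
  set σ : Fin r ⊕ Unit → Fin p := Sum.elim (Fin.castLE hrp) (fun _ => ⟨r + j, hj⟩) with hσ
  set Qp : Matrix (Fin r ⊕ Unit) (Fin r ⊕ Unit) F[X] :=
    (X : F[X]) • (M.submatrix ρ σ).map C + (Jm.submatrix ρ σ).map C with hQp
  -- determinant of Qp is zero
  have hdeg : Qp.det.natDegree ≤ r + 1 := by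
    have := Polynomial.natDegree_det_X_add_C_le (M.submatrix ρ σ) (Jm.submatrix ρ σ)
    simpa using this
  have heval : ∀ t : F, Qp.det.eval t = 0 := by
    intro t
    have h1 : (Polynomial.evalRingHom t) Qp.det = (Qp.map (Polynomial.evalRingHom t)).det :=
      RingHom.map_det _ _
    have h2 : Qp.map (Polynomial.evalRingHom t) = (Jm + t • M).submatrix ρ σ := by
      ext a b
      simp only [hQp, Matrix.map_apply, Matrix.add_apply, Matrix.smul_apply, smul_eq_mul,
        coe_evalRingHom, eval_add, eval_mul, eval_X, eval_C, Matrix.submatrix_apply]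
      ring
    have h3 : ((Jm + t • M).submatrix ρ σ).det = 0 := by
      by_contra h
      have hu : IsUnit ((Jm + t • M).submatrix ρ σ) :=
        (Matrix.isUnit_iff_isUnit_det _).mpr (isUnit_iff_ne_zero.mpr h)
      have h4 := Matrix.rank_of_isUnit _ hu
      have h5 : ((Jm + t • M).submatrix ρ σ).rank ≤ r := le_trans (my_rank_sub_le _ _ _) (hrank t)
      rw [h4, Fintype.card_sum, Fintype.card_fin, Fintype.card_unit] at h5
      omega
    rw [show eval t Qp.det = (evalRingHom t) Qp.det from rfl, h1, h2, h3]
  have hQ0 : Qp.det = 0 := by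
    apply Polynomial.eq_zero_of_forall_eval_zero_of_natDegree_lt_card _ heval
    calc (Qp.det.natDegree : Cardinal) ≤ ((r + 1 : ℕ) : Cardinal) := by
          exact_mod_cast Nat.cast_le.mpr hdeg
      _ < Cardinal.mk F := hF
  -- move to power series
  set φ : F[X] →+* PowerSeries F := Polynomial.coeToPowerSeries.ringHom with hφ
  set Am : Matrix (Fin r) (Fin r) F :=
    Matrix.of fun a b => M (Fin.castLE hrn a) (Fin.castLE hrp b) with hAm
  set cvec : Fin r → F := fun l => M (Fin.castLE hrn l) ⟨r + j, hj⟩ with hcvec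
  set bvec : Fin r → F := fun l => M ⟨r + i, hi⟩ (Fin.castLE hrp l) with hbvec
  set d : F := M ⟨r + i, hi⟩ ⟨r + j, hj⟩ with hd
  set P : Matrix (Fin r) (Fin r) (PowerSeries F) :=
    1 + (PowerSeries.X : PowerSeries F) • Am.map (PowerSeries.C (R := F)) with hP
  set c0 : Matrix (Fin r) Unit (PowerSeries F) :=
    Matrix.of (fun k (_ : Unit) => PowerSeries.C (R := F) (cvec k)) with hc0
  set b0 : Matrix Unit (Fin r) (PowerSeries F) :=
    Matrix.of (fun (_ : Unit) k => PowerSeries.C (R := F) (bvec k)) with hb0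
  set Dm : Matrix Unit Unit (PowerSeries F) :=
    Matrix.of (fun (_ : Unit) (_ : Unit) =>
      (PowerSeries.X : PowerSeries F) * PowerSeries.C (R := F) d) with hDm
  have hN : Qp.map φ = Matrix.fromBlocks P ((PowerSeries.X : PowerSeries F) • c0)
      ((PowerSeries.X : PowerSeries F) • b0) Dm := by
    apply Matrix.ext
    intro a b
    rcases a with a | a <;> rcases b with b | b <;>
      simp only [Matrix.map_apply, hQp, Matrix.add_apply, Matrix.smul_apply, smul_eq_mul,
        Matrix.submatrix_apply, hρ, hσ, Sum.elim_inl, Sum.elim_inr, _root_.map_add,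
        _root_.map_mul, Polynomial.coeToPowerSeries.ringHom_apply, Polynomial.coe_X,
        Polynomial.coe_C, hφ,
        Matrix.fromBlocks_apply₁₁, Matrix.fromBlocks_apply₁₂, Matrix.fromBlocks_apply₂₁,
        Matrix.fromBlocks_apply₂₂, hJm, Matrix.of_apply,
        Matrix.one_apply, Fin.coe_castLE, apply_ite (PowerSeries.C (R := F)), _root_.map_one, _root_.map_zero]
    · have hcond : ((a : ℕ) = (b : ℕ) ∧ (a : ℕ) < r) ↔ (a = b) :=
        ⟨fun h => Fin.ext h.1, fun h => ⟨congrArg Fin.val h, a.isLt⟩⟩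
      simp only [hcond, hP, Matrix.add_apply, Matrix.smul_apply, Matrix.map_apply, hAm,
        Matrix.of_apply, Matrix.one_apply, smul_eq_mul, _root_.map_one]
      ring
    · rw [if_neg (by omega), add_zero]; rfl
    · rw [if_neg (by omega), add_zero]; rfl
    · rw [if_neg (by omega), add_zero]; rfl
  have hPc : P.map (PowerSeries.constantCoeff (R := F)) = 1 := by
    apply Matrix.ext
    intro a b
    simp only [hP, Matrix.map_apply, Matrix.add_apply, Matrix.smul_apply, smul_eq_mul,
      _root_.map_add, _root_.map_mul, PowerSeries.constantCoeff_X, zero_mul, add_zero,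
      Matrix.one_apply, apply_ite (PowerSeries.constantCoeff (R := F)), _root_.map_one, _root_.map_zero]
  have hPdet : IsUnit P.det := by
    have h : (PowerSeries.constantCoeff (R := F)) P.det = 1 := by
      rw [RingHom.map_det, RingHom.mapMatrix_apply, hPc, Matrix.det_one]
    rw [PowerSeries.isUnit_iff_constantCoeff, h]
    exact isUnit_one
  letI : Invertible P := P.invertibleOfIsUnitDet hPdet
  have hdet0 : (Matrix.fromBlocks P ((PowerSeries.X : PowerSeries F) • c0)
      ((PowerSeries.X : PowerSeries F) • b0) Dm).det = 0 := by
    have hmd : φ Qp.det = (Qp.map φ).det := by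
      rw [RingHom.map_det, RingHom.mapMatrix_apply]
    rw [← hN, ← hmd, hQ0, _root_.map_zero]
  rw [Matrix.det_fromBlocks₁₁] at hdet0
  have hSchur : (Dm - ((PowerSeries.X : PowerSeries F) • b0) * ⅟P *
      ((PowerSeries.X : PowerSeries F) • c0)).det = 0 := by
    rcases mul_eq_zero.mp hdet0 with h | h
    · exact absurd h hPdet.ne_zero
    · exact h
  rw [Matrix.det_unique] at hSchur
  set V : Matrix (Fin r) Unit (PowerSeries F) := ⅟P * c0 with hVdef
  have hPV : V = c0 - (PowerSeries.X : PowerSeries F) • (Am.map (PowerSeries.C (R := F)) * V) := by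
    have h1 : P * V = c0 := by rw [hVdef, ← Matrix.mul_assoc, mul_invOf_self, Matrix.one_mul]
    have h2 : P * V = V + (PowerSeries.X : PowerSeries F) • (Am.map (PowerSeries.C (R := F)) * V) := by
      rw [hP, Matrix.add_mul, Matrix.one_mul, Matrix.smul_mul]
    rw [h2] at h1
    exact eq_sub_of_add_eq h1
  have hprod : ((PowerSeries.X : PowerSeries F) • b0) * ⅟P * ((PowerSeries.X : PowerSeries F) • c0)
      = (PowerSeries.X * PowerSeries.X : PowerSeries F) • (b0 * V) := by
    simp only [hVdef, Matrix.smul_mul, Matrix.mul_smul, smul_smul, Matrix.mul_assoc]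
  rw [hprod] at hSchur
  rw [Matrix.sub_apply, Matrix.smul_apply, smul_eq_mul] at hSchur
  replace hSchur : PowerSeries.X * PowerSeries.C (R := F) d
      - PowerSeries.X * PowerSeries.X * ((b0 * V) () ()) = 0 := hSchur
  have hVk : ∀ k, V k () = PowerSeries.C (R := F) (cvec k)
      - PowerSeries.X * ((Am.map (PowerSeries.C (R := F)) * V) k ()) := by
    intro k
    have h := congrFun (congrFun hPV k) ()
    rw [Matrix.sub_apply, Matrix.smul_apply, smul_eq_mul] at h
    exact h
  have hw : ∀ m, (fun k => PowerSeries.coeff (R := F) m (V k ())) = ((-Am) ^ m) *ᵥ cvec := by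
    intro m
    induction m with
    | zero =>
      funext k
      rw [hVk k, map_sub, PowerSeries.coeff_zero_C, PowerSeries.coeff_zero_X_mul, sub_zero]
      simp [Matrix.one_mulVec]
    | succ m ih =>
      funext k
      rw [hVk k, map_sub, PowerSeries.coeff_C, if_neg (Nat.succ_ne_zero m),
        PowerSeries.coeff_succ_X_mul, zero_sub]
      have hAV : (Am.map (PowerSeries.C (R := F)) * V) k () = ∑ l, PowerSeries.C (R := F) (Am k l) * V l () := by
        simp [Matrix.mul_apply]
      rw [hAV, map_sum]
      simp only [PowerSeries.coeff_C_mul]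
      conv_rhs => rw [pow_succ', ← Matrix.mulVec_mulVec, Matrix.neg_mulVec, ← ih]
      simp [Matrix.mulVec, dotProduct]
  have hs : ∀ m, PowerSeries.coeff (R := F) m ((b0 * V) () ()) = bvec ⬝ᵥ (((-Am) ^ m) *ᵥ cvec) := by
    intro m
    have hbV : (b0 * V) () () = ∑ l, PowerSeries.C (R := F) (bvec l) * V l () := by
      simp [Matrix.mul_apply, hb0]
    rw [hbV, map_sum]
    simp only [PowerSeries.coeff_C_mul]
    rw [← hw m]
    rfl
  have hd0 : d = 0 := by
    have h := congrArg (PowerSeries.coeff (R := F) 1) hSchur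
    rw [map_sub, _root_.map_zero, mul_assoc, PowerSeries.coeff_succ_X_mul,
      PowerSeries.coeff_succ_X_mul, PowerSeries.coeff_zero_C, PowerSeries.coeff_zero_X_mul,
      sub_zero] at h
    exact h
  have hs0 : (b0 * V) () () = 0 := by
    have hx : (PowerSeries.X * PowerSeries.X : PowerSeries F) * ((b0 * V) () ()) = 0 := by
      have := hSchur
      rw [hd0, _root_.map_zero, mul_zero, zero_sub, neg_eq_zero] at this
      exact this
    have hX2 : (PowerSeries.X * PowerSeries.X : PowerSeries F) ≠ 0 :=
      mul_ne_zero PowerSeries.X_ne_zero PowerSeries.X_ne_zero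
    exact (mul_eq_zero.mp hx).resolve_left hX2
  have hfin : ∀ m, bvec ⬝ᵥ (((-Am) ^ m) *ᵥ cvec) = 0 := by
    intro m
    rw [← hs m, hs0, _root_.map_zero]
  constructor
  · exact hd0
  · intro k
    have h1 : ((-Am) ^ k : Matrix (Fin r) (Fin r) F) = ((-1 : F) ^ k) • (Am ^ k) := by
      rw [← neg_one_smul F Am, _root_.smul_pow]
    have h := hfin k
    rw [h1, Matrix.smul_mulVec, dotProduct_smul, smul_eq_mul] at h
    have hne : ((-1 : F) ^ k) ≠ 0 := pow_ne_zero _ (by norm_num)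
    exact (mul_eq_zero.mp h).resolve_left hne

/-- Affine Flanders–Atkinson lemma: Over a field with more than
r+1 elements, with 0 < r ≤ min(n, p), if M = [[A, C], [B, D]] (A of size r×r)
is an n×p matrix such that rank(J_r + t·M) ≤ r for all t ∈ F, where J_r is the
n×p matrix with top-left block I_r and zeros elsewhere, then D = 0 and
B·A^k·C = 0 for every integer k ≥ 0. -/
theorem stmt_12 (F : Type) [Field F] (n p r : ℕ) (hr : 0 < r) (hrn : r ≤ n) (hrp : r ≤ p)
    (hF : ((r + 1 : ℕ) : Cardinal) < Cardinal.mk F)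
    (M : Matrix (Fin n) (Fin p) F)
    (hrank : ∀ t : F,
      (Matrix.of (fun (i : Fin n) (j : Fin p) =>
          if (i : ℕ) = (j : ℕ) ∧ (i : ℕ) < r then (1 : F) else 0) + t • M).rank ≤ r) :
    (∀ (i : Fin n) (j : Fin p), r ≤ (i : ℕ) → r ≤ (j : ℕ) → M i j = 0) ∧
    ∀ k : ℕ,
      (Matrix.of fun (a : Fin (n - r)) (b : Fin r) =>
          M ⟨r + ↑a, by have := a.isLt; omega⟩ (Fin.castLE hrp b)) *
        (Matrix.of fun (a b : Fin r) => M (Fin.castLE hrn a) (Fin.castLE hrp b)) ^ k *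
        (Matrix.of fun (a : Fin r) (b : Fin (p - r)) =>
          M (Fin.castLE hrn a) ⟨r + ↑b, by have := b.isLt; omega⟩) = 0 := by
  constructor
  · intro i' j' hi' hj'
    have hi2 : (i' : ℕ) - r < n - r := by omega
    have hj2 : (j' : ℕ) - r < p - r := by omega
    have h := (my_key F n p r hr hrn hrp hF M hrank ⟨(i' : ℕ) - r, hi2⟩ ⟨(j' : ℕ) - r, hj2⟩).1
    have e1 : i' = (⟨r + ((i' : ℕ) - r), by omega⟩ : Fin n) := Fin.ext (by simp; omega)
    have e2 : j' = (⟨r + ((j' : ℕ) - r), by omega⟩ : Fin p) := Fin.ext (by simp; omega)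
    rw [congrArg₂ M e1 e2]
    exact h
  · intro k
    apply Matrix.ext
    intro a b
    have h := (my_key F n p r hr hrn hrp hF M hrank a b).2 k
    rw [Matrix.mul_assoc]
    simp only [Matrix.mul_apply, Matrix.of_apply, Matrix.zero_apply]
    simpa [Matrix.mulVec, dotProduct, Matrix.mul_apply, Matrix.of_apply] using h
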